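/- For all real numbers λ̄ > 0, β ∈ [0,1], and κ ∈ (0,1] with βκ ≤ 1: sup over ζ > 0 of (ζ² + 1 + 2ζ)/(ζ² + 1 − β² + 2βκζ) equals (2 − β² − 2βκ)/(1 − β²(1+κ²)) if 1 − β² − βκ > 0, and equals 1/(1−β²) otherwise. -/
import Mathlib


/-- for `λ̄ > 0`, `β ∈ [0,1]`, `κ ∈ (0,1]` with `βκ ≤ 1`, the supremum over
`ζ > 0` of `(ζ²+1+2ζ)/(ζ²+1−β²+2βκζ)` equals `(2−β²−2βκ)/(1−β²(1+κ²))` if `1−β²−βκ > 0`,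
and `1/(1−β²)` otherwise. -/
theorem stmt14 (lam β κ : ℝ) (hlam : 0 < lam) (hβ : β ∈ Set.Icc (0 : ℝ) 1)
    (hκ : κ ∈ Set.Ioc (0 : ℝ) 1) (hβκ : β * κ ≤ 1) :
    sSup {r : ℝ | ∃ ζ : ℝ, 0 < ζ ∧
        r = (ζ ^ 2 + 1 + 2 * ζ) / (ζ ^ 2 + 1 - β ^ 2 + 2 * β * κ * ζ)} =
      if 0 < 1 - β ^ 2 - β * κ then (2 - β ^ 2 - 2 * β * κ) / (1 - β ^ 2 * (1 + κ ^ 2))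
      else 1 / (1 - β ^ 2) := by
  obtain ⟨hβ0, hβ1⟩ := hβ
  obtain ⟨hκ0, hκ1⟩ := hκ
  set S := {r : ℝ | ∃ ζ : ℝ, 0 < ζ ∧
      r = (ζ ^ 2 + 1 + 2 * ζ) / (ζ ^ 2 + 1 - β ^ 2 + 2 * β * κ * ζ)} with hSdef
  by_cases hcond : 0 < 1 - β ^ 2 - β * κ
  · rw [if_pos hcond]
    have hβκ0 : 0 ≤ β * κ := mul_nonneg hβ0 hκ0.le
    have hq : 0 < 1 - β * κ := by nlinarith [sq_nonneg β]
    have hA : 0 < 1 - β ^ 2 * (1 + κ ^ 2) := by nlinarith [mul_nonneg hβκ0 hq.le]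
    have hd : ∀ ζ : ℝ, 0 < ζ → 0 < ζ ^ 2 + 1 - β ^ 2 + 2 * β * κ * ζ := by
      intro ζ hζ
      nlinarith [mul_nonneg hβκ0 hζ.le, sq_nonneg ζ]
    have hub : ∀ r ∈ S, r ≤ (2 - β ^ 2 - 2 * β * κ) / (1 - β ^ 2 * (1 + κ ^ 2)) := by
      rintro r ⟨ζ, hζ, rfl⟩
      rw [div_le_div_iff₀ (hd ζ hζ) hA]
      nlinarith [sq_nonneg ((1 - β * κ) * ζ - (1 - β ^ 2 - β * κ))]
    have hζs : 0 < (1 - β ^ 2 - β * κ) / (1 - β * κ) := div_pos hcond hq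
    have hmem : (2 - β ^ 2 - 2 * β * κ) / (1 - β ^ 2 * (1 + κ ^ 2)) ∈ S := by
      refine ⟨(1 - β ^ 2 - β * κ) / (1 - β * κ), hζs, ?_⟩
      have hd' := hd _ hζs
      rw [div_eq_div_iff hA.ne' hd'.ne']
      field_simp
      ring
    exact le_antisymm (csSup_le ⟨_, hmem⟩ hub) (le_csSup ⟨_, hub⟩ hmem)
  · rw [if_neg hcond]
    push_neg at hcond
    by_cases hβlt : β < 1
    · have hβ2 : 0 < 1 - β ^ 2 := by nlinarith
      have hd : ∀ ζ : ℝ, 0 < ζ → 0 < ζ ^ 2 + 1 - β ^ 2 + 2 * β * κ * ζ := by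
        intro ζ hζ
        nlinarith [mul_nonneg (mul_nonneg hβ0 hκ0.le) hζ.le, sq_nonneg ζ]
      have hub : ∀ r ∈ S, r ≤ 1 / (1 - β ^ 2) := by
        rintro r ⟨ζ, hζ, rfl⟩
        rw [div_le_div_iff₀ (hd ζ hζ) hβ2]
        nlinarith [mul_nonneg (sq_nonneg β) (sq_nonneg ζ),
          mul_nonneg hζ.le (show (0:ℝ) ≤ β ^ 2 + β * κ - 1 by linarith)]
      have hne : S.Nonempty := ⟨_, 1, one_pos, rfl⟩
      have hbdd : BddAbove S := ⟨_, hub⟩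
      refine le_antisymm (csSup_le hne hub) ?_
      have hcont : ContinuousAt
          (fun ζ : ℝ => (ζ ^ 2 + 1 + 2 * ζ) / (ζ ^ 2 + 1 - β ^ 2 + 2 * β * κ * ζ)) 0 := by
        apply ContinuousAt.div (by fun_prop) (by fun_prop)
        simp only [ne_eq]
        norm_num
        linarith
      have htend : Filter.Tendsto
          (fun ζ : ℝ => (ζ ^ 2 + 1 + 2 * ζ) / (ζ ^ 2 + 1 - β ^ 2 + 2 * β * κ * ζ))
          (nhdsWithin 0 (Set.Ioi 0)) (nhds (1 / (1 - β ^ 2))) := by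
        have h := hcont.continuousWithinAt (s := Set.Ioi 0)
        have : ((0:ℝ) ^ 2 + 1 + 2 * 0) / ((0:ℝ) ^ 2 + 1 - β ^ 2 + 2 * β * κ * 0) =
            1 / (1 - β ^ 2) := by norm_num
        rw [ContinuousWithinAt, this] at h
        exact h
      refine le_of_tendsto htend ?_
      filter_upwards [self_mem_nhdsWithin] with ζ hζ
      exact le_csSup hbdd ⟨ζ, hζ, rfl⟩
    · have hβ1' : β = 1 := le_antisymm hβ1 (not_lt.mp hβlt)
      subst hβ1'
      rw [Real.sSup_of_not_bddAbove, (by norm_num : (1:ℝ) - 1 ^ 2 = 0), div_zero]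
      rintro ⟨b, hb⟩
      set ζ := min 1 (1 / (3 * (|b| + 1))) with hζdef
      have hζpos : 0 < ζ := lt_min one_pos (by positivity)
      have hζ1 : ζ ≤ 1 := min_le_left _ _
      have hζ2 : ζ * (3 * (|b| + 1)) ≤ 1 := by
        have := min_le_right 1 (1 / (3 * (|b| + 1)))
        rw [le_div_iff₀ (by positivity)] at this
        linarith
      have hfle := hb ⟨ζ, hζpos, rfl⟩
      have hdpos : 0 < ζ ^ 2 + 1 - 1 ^ 2 + 2 * 1 * κ * ζ := by nlinarith
      rw [div_le_iff₀ hdpos] at hfle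
      have hd3 : ζ ^ 2 + 1 - 1 ^ 2 + 2 * 1 * κ * ζ ≤ 3 * ζ := by nlinarith
      nlinarith [le_abs_self b, abs_nonneg b, sq_nonneg ζ,
        mul_le_mul_of_nonneg_left hd3 (abs_nonneg b),
        mul_nonneg (abs_nonneg b) hdpos.le]
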